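/- Let A be the 3×3 matrix with rows (0,0,14), (0,6,0), (15,4,6) and b = (1,1,0)ᵀ. Then A is similar to a nonnegative upper Hessenberg matrix, but there exists no invertible nonnegative 3×3 matrix T whose first column is b such that T⁻¹AT is nonnegative. -/

import Mathlib

set_option maxHeartbeats 1000000

open Matrix

/-- The matrix `A = !![0,0,14; 0,6,0; 15,4,6]` is similar to a nonnegative
upper Hessenberg matrix, but there is no invertible nonnegative `T` with first column
`b = (1,1,0)ᵀ` such that `T⁻¹ A T` is nonnegative. -/
theorem counterexample_DT_controller_hessenberg :
    (∃ (B T : Matrix (Fin 3) (Fin 3) ℝ), T.det ≠ 0 ∧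
        T⁻¹ * (!![0, 0, 14; 0, 6, 0; 15, 4, 6] : Matrix (Fin 3) (Fin 3) ℝ) * T = B ∧
        (∀ i j, 0 ≤ B i j) ∧ (∀ i j : Fin 3, (j : ℕ) + 1 < (i : ℕ) → B i j = 0)) ∧
    ¬ ∃ T : Matrix (Fin 3) (Fin 3) ℝ, (∀ i j, 0 ≤ T i j) ∧ T.det ≠ 0 ∧
        (∀ i, T i 0 = (![1, 1, 0] : Fin 3 → ℝ) i) ∧
        (∀ i j, 0 ≤ (T⁻¹ * (!![0, 0, 14; 0, 6, 0; 15, 4, 6] : Matrix (Fin 3) (Fin 3) ℝ) * T) i j) := by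
  constructor
  · refine ⟨!![0,14,0;15,6,4;0,0,6], !![1,0,0;0,0,1;0,1,0], ?_, ?_, ?_, ?_⟩
    · norm_num [Matrix.det_fin_three, Matrix.cons_val_two, Matrix.vecHead, Matrix.vecTail]
    · have hT : (!![1,0,0;0,0,1;0,1,0] : Matrix (Fin 3) (Fin 3) ℝ) * !![1,0,0;0,0,1;0,1,0] = 1 := by
        norm_num [Matrix.mul_fin_three, Matrix.one_fin_three, ← Matrix.ext_iff]
      rw [Matrix.inv_eq_left_inv hT]
      norm_num [Matrix.mul_fin_three]
    · intro i j; fin_cases i <;> fin_cases j <;> norm_num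
    · intro i j h; fin_cases i <;> fin_cases j <;> simp_all
  · rintro ⟨T, hTnn, hdet, hcol, hMnn⟩
    set A : Matrix (Fin 3) (Fin 3) ℝ := !![0,0,14;0,6,0;15,4,6] with hA
    set M : Matrix (Fin 3) (Fin 3) ℝ := T⁻¹ * A * T with hMdef
    have hTT : T * T⁻¹ = 1 := Matrix.mul_nonsing_inv T (isUnit_iff_ne_zero.2 hdet)
    have h1 : A * T = T * M := by
      rw [hMdef, ← Matrix.mul_assoc, ← Matrix.mul_assoc, hTT, Matrix.one_mul]
    set N : Matrix (Fin 3) (Fin 3) ℝ := M * M with hNdef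
    set P : Matrix (Fin 3) (Fin 3) ℝ := M * N with hPdef
    have h2 : A * (A * T) = T * N := by
      rw [h1, ← Matrix.mul_assoc, h1, Matrix.mul_assoc, hNdef]
    have h3 : A * (A * (A * T)) = T * P := by
      rw [h2, ← Matrix.mul_assoc, h1, Matrix.mul_assoc, hPdef]
    have hNnn : ∀ i j, 0 ≤ N i j := by
      intro i j; rw [hNdef, Matrix.mul_apply]
      exact Finset.sum_nonneg fun k _ => mul_nonneg (hMnn i k) (hMnn k j)
    have hPnn : ∀ i j, 0 ≤ P i j := by
      intro i j; rw [hPdef, Matrix.mul_apply]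
      exact Finset.sum_nonneg fun k _ => mul_nonneg (hMnn i k) (hNnn k j)
    have e10 := congrFun (congrFun h1 0) 0
    have e11 := congrFun (congrFun h1 1) 0
    have e12 := congrFun (congrFun h1 2) 0
    have e20 := congrFun (congrFun h2 0) 0
    have e21 := congrFun (congrFun h2 1) 0
    have e22 := congrFun (congrFun h2 2) 0
    have e30 := congrFun (congrFun h3 0) 0
    have e31 := congrFun (congrFun h3 1) 0
    have e32 := congrFun (congrFun h3 2) 0
    simp [Matrix.mul_apply, Matrix.vecMul, dotProduct, Fin.sum_univ_three, hA, Matrix.vecHead, Matrix.vecTail,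
      hcol 0, hcol 1, hcol 2] at e10 e11 e12 e20 e21 e22 e30 e31 e32
    norm_num at e12 e20 e21 e22 e30 e31 e32
    clear h1 h2 h3 hTT hPdef hNdef hMdef hA hdet hcol
    clear_value P N M A
    rcases (hTnn 0 2).eq_or_lt with hu | hu
    · -- T 0 2 = 0  (hu : 0 = T 0 2)
      rcases (hTnn 0 1).eq_or_lt with hp | hp
      · -- T 0 1 = 0 as well
        rw [← hp, ← hu, zero_mul, zero_mul, add_zero, add_zero] at e20
        nlinarith [e20, e21, mul_nonneg (hTnn 1 1) (hNnn 1 0), mul_nonneg (hTnn 1 2) (hNnn 2 0)]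
      · -- 0 < T 0 1
        have hm10 : M 1 0 = 0 := by
          by_contra h
          have h' : 0 < M 1 0 := (hMnn 1 0).lt_of_ne (Ne.symm h)
          nlinarith [mul_pos hp h', mul_nonneg (hTnn 0 2) (hMnn 2 0), hMnn 0 0, e10]
        have hm00 : M 0 0 = 0 := by
          nlinarith [mul_nonneg (hTnn 0 1) (hMnn 1 0), mul_nonneg (hTnn 0 2) (hMnn 2 0),
            hMnn 0 0, e10]
        rw [hm10, mul_zero, zero_add] at e12
        rw [hm00, hm10, mul_zero, zero_add, zero_add] at e11
        -- e11 : 6 = T 1 2 * M 2 0 ; e12 : 19 = T 2 2 * M 2 0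
        have hws : 6 * T 2 2 = 19 * T 1 2 := by
          linear_combination T 2 2 * e11 - T 1 2 * e12
        have hc0 : N 0 0 ≤ 36 := by
          nlinarith [e21, mul_nonneg (hTnn 1 1) (hNnn 1 0), mul_nonneg (hTnn 1 2) (hNnn 2 0)]
        rw [← hu, zero_mul, add_zero] at e20 e30
        have hpc1 : 230 ≤ T 0 1 * N 1 0 := by linarith
        have hrc1 : T 2 1 * N 1 0 ≤ 138 := by
          nlinarith [e22, mul_nonneg (hTnn 2 2) (hNnn 2 0)]
        have hwd2 : T 1 2 * P 2 0 ≤ 216 := by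
          nlinarith [e31, hPnn 0 0, mul_nonneg (hTnn 1 1) (hPnn 1 0)]
        have hpd1 : T 0 1 * P 1 0 ≤ 1932 := by
          nlinarith [e30, hPnn 0 0]
        have hsd2 : T 2 2 * P 2 0 ≤ 684 := by
          have h6 : 6 * (T 2 2 * P 2 0) = 19 * (T 1 2 * P 2 0) := by
            linear_combination P 2 0 * hws
          linarith
        have hrd1 : 4278 ≤ T 2 1 * P 1 0 := by linarith [e32]
        have k1 : (230:ℝ) * 4278 ≤ (T 0 1 * N 1 0) * (T 2 1 * P 1 0) :=
          mul_le_mul hpc1 hrd1 (by norm_num) (by linarith)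
        have k2 : (T 2 1 * N 1 0) * (T 0 1 * P 1 0) ≤ 138 * 1932 :=
          mul_le_mul hrc1 hpd1 (mul_nonneg (hTnn 0 1) (hPnn 1 0)) (by norm_num)
        have k3 : (T 0 1 * N 1 0) * (T 2 1 * P 1 0) = (T 2 1 * N 1 0) * (T 0 1 * P 1 0) := by
          ring
        linarith
    · -- 0 < T 0 2
      have hm20 : M 2 0 = 0 := by
        by_contra h
        have h' : 0 < M 2 0 := (hMnn 2 0).lt_of_ne (Ne.symm h)
        nlinarith [mul_pos hu h', mul_nonneg (hTnn 0 1) (hMnn 1 0), hMnn 0 0, e10]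
      have hm00 : M 0 0 = 0 := by
        nlinarith [mul_nonneg (hTnn 0 1) (hMnn 1 0), mul_nonneg (hTnn 0 2) (hMnn 2 0),
          hMnn 0 0, e10]
      rw [hm20, mul_zero, add_zero] at e12
      rw [hm00, hm20, mul_zero, add_zero, zero_add] at e11
      -- e11 : 6 = T 1 1 * M 1 0 ; e12 : 19 = T 2 1 * M 1 0
      have hm10 : 0 < M 1 0 := by
        rcases (hMnn 1 0).eq_or_lt with h | h
        · exfalso; rw [← h, mul_zero] at e12; norm_num at e12
        · exact h
      have hp : T 0 1 = 0 := by
        by_contra h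
        have h' : 0 < T 0 1 := (hTnn 0 1).lt_of_ne (Ne.symm h)
        nlinarith [mul_pos h' hm10, mul_nonneg (hTnn 0 2) (hMnn 2 0), hMnn 0 0, e10]
      have hqr : 6 * T 2 1 = 19 * T 1 1 := by
        linear_combination T 2 1 * e11 - T 1 1 * e12
      have hc0 : N 0 0 ≤ 36 := by
        nlinarith [e21, mul_nonneg (hTnn 1 1) (hNnn 1 0), mul_nonneg (hTnn 1 2) (hNnn 2 0)]
      rw [hp, zero_mul, add_zero] at e20 e30
      have huc2 : 230 ≤ T 0 2 * N 2 0 := by linarith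
      have hsc2 : T 2 2 * N 2 0 ≤ 138 := by
        nlinarith [e22, mul_nonneg (hTnn 2 1) (hNnn 1 0)]
      have hqd1 : T 1 1 * P 1 0 ≤ 216 := by
        nlinarith [e31, hPnn 0 0, mul_nonneg (hTnn 1 2) (hPnn 2 0)]
      have hud2 : T 0 2 * P 2 0 ≤ 1932 := by
        nlinarith [e30, hPnn 0 0]
      have hrd1 : T 2 1 * P 1 0 ≤ 684 := by
        have h6 : 6 * (T 2 1 * P 1 0) = 19 * (T 1 1 * P 1 0) := by
          linear_combination P 1 0 * hqr
        linarith
      have hsd2 : 4278 ≤ T 2 2 * P 2 0 := by linarith [e32]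
      have k1 : (230:ℝ) * 4278 ≤ (T 0 2 * N 2 0) * (T 2 2 * P 2 0) :=
        mul_le_mul huc2 hsd2 (by norm_num) (by linarith)
      have k2 : (T 2 2 * N 2 0) * (T 0 2 * P 2 0) ≤ 138 * 1932 :=
        mul_le_mul hsc2 hud2 (mul_nonneg (hTnn 0 2) (hPnn 2 0)) (by norm_num)
      have k3 : (T 0 2 * N 2 0) * (T 2 2 * P 2 0) = (T 2 2 * N 2 0) * (T 0 2 * P 2 0) := by
        ring
      linarith
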